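/- Let ρ = 2^{−m} ∏_{k=1}^m (I + i λ_k c̃_{2k−1} c̃_{2k}) be a Gaussian state in standard form, with λ_1, …, λ_m ∈ [−1, 1], c̃_j = Σ_{i=1}^{2m} R_{ij} c_i and R ∈ SO(2m,ℝ). Then ρ² = ρ (i.e., ρ is a pure state) if and only if λ_k ∈ {−1, 1} for every k. -/

import Mathlib

open Matrix Kronecker Finset
open scoped ComplexOrder

noncomputable section

/-- A Majorana family: `2*m` Hermitian `2^m × 2^m` complex matrices squaring to the
identity and pairwise anticommuting. -/
structure MajoranaFamily (m : ℕ) where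
  c : Fin (2*m) → Matrix (Fin (2^m)) (Fin (2^m)) ℂ
  herm : ∀ j, (c j).IsHermitian
  sq : ∀ j, c j * c j = 1
  anticomm : ∀ j k, j ≠ k → c j * c k = -(c k * c j)

abbrev Mat (m : ℕ) := Matrix (Fin (2^m)) (Fin (2^m)) ℂ
abbrev Mat2 (m : ℕ) := Matrix (Fin (2^m) × Fin (2^m)) (Fin (2^m) × Fin (2^m)) ℂ
abbrev MatN (m n : ℕ) := Matrix (Fin n → Fin (2^m)) (Fin n → Fin (2^m)) ℂ

variable {m : ℕ}

/-- A state: a positive semidefinite matrix of trace `1`. -/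
def IsState {ι : Type*} [Fintype ι] (ρ : Matrix ι ι ℂ) : Prop :=
  ρ.PosSemidef ∧ ρ.trace = 1

/-- The square root of a positive semidefinite matrix (removed from Mathlib; old definition). -/
def Matrix.PosSemidef.sqrt {n : Type*} [Fintype n] [DecidableEq n] {A : Matrix n n ℂ}
    (hA : A.PosSemidef) : Matrix n n ℂ :=
  hA.1.eigenvectorUnitary.1 * diagonal ((↑) ∘ (Real.sqrt ·) ∘ hA.1.eigenvalues) *
    (star hA.1.eigenvectorUnitary : Matrix n n ℂ)

/-- The trace norm `‖X‖₁ = Tr √(XᴴX)`. -/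
def traceNorm {ι : Type*} [Fintype ι] [DecidableEq ι] (X : Matrix ι ι ℂ) : ℝ :=
  ((Matrix.posSemidef_conjTranspose_mul_self X).sqrt.trace).re

/-- The rotated Majorana operators `c̃_j = Σ_i R_{ij} c_i`. -/
def tilde (F : MajoranaFamily m) (R : Matrix (Fin (2*m)) (Fin (2*m)) ℝ)
    (j : Fin (2*m)) : Mat m :=
  ∑ i, (R i j : ℂ) • F.c i

/-- Standard-form Gaussian state `2^{-m} ∏_{k=1}^m (I + i λ_k c̃_{2k-1} c̃_{2k})`
(ordered product; the factors commute). -/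
def gaussStd (F : MajoranaFamily m) (R : Matrix (Fin (2*m)) (Fin (2*m)) ℝ)
    (lam : Fin m → ℝ) : Mat m :=
  ((2:ℂ)^m)⁻¹ • (List.ofFn (fun k : Fin m =>
    (1 : Mat m) + (Complex.I * (lam k : ℂ)) •
      (tilde F R ⟨2*k.val, by omega⟩ * tilde F R ⟨2*k.val+1, by omega⟩))).prod

/-- A pure Gaussian state: a standard-form Gaussian state with all `λ_k ∈ {-1,1}`,
for some `R ∈ SO(2m,ℝ)`. -/
def IsPureGaussian (F : MajoranaFamily m) (ρ : Mat m) : Prop :=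
  ∃ (R : Matrix (Fin (2*m)) (Fin (2*m)) ℝ) (lam : Fin m → ℝ),
    Rᵀ * R = 1 ∧ R.det = 1 ∧ (∀ k, lam k = 1 ∨ lam k = -1) ∧ ρ = gaussStd F R lam

/-- A convex-Gaussian state: a finite convex combination of pure Gaussian states. -/
def IsConvexGaussian (F : MajoranaFamily m) (ρ : Mat m) : Prop :=
  ∃ (k : ℕ) (p : Fin k → ℝ) (g : Fin k → Mat m),
    (∀ i, 0 ≤ p i) ∧ (∑ i, p i) = 1 ∧ (∀ i, IsPureGaussian F (g i)) ∧
    ρ = ∑ i, p i • g i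

/-- `Λ = Σ_j c_j ⊗ c_j` on `ℂ^N ⊗ ℂ^N`. -/
def Lambda (F : MajoranaFamily m) : Mat2 m := ∑ j, F.c j ⊗ₖ F.c j

/-- Ordered product `c_{a_1} ⋯ c_{a_r}` over a finite set `S = {a_1 < … < a_r}`. -/
def majProd (F : MajoranaFamily m) (S : Finset (Fin (2*m))) : Mat m :=
  ((S.sort (· ≤ ·)).map F.c).prod

/-- An even operator: a complex linear combination of the identity and products of
an even number of distinct Majorana operators. -/
def IsEven (F : MajoranaFamily m) (X : Mat m) : Prop :=
  X ∈ Submodule.span ℂ {Y : Mat m | ∃ S : Finset (Fin (2*m)), Even S.card ∧ Y = majProd F S}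

/-- The Hermitian correlator `i^k c_{a_1} ⋯ c_{a_{2k}}` associated to a set of
cardinality `2k`. -/
def corrOp (F : MajoranaFamily m) (S : Finset (Fin (2*m))) : Mat m :=
  (Complex.I ^ (S.card / 2)) • majProd F S

/-- The operator acting as `A` on the `k`-th tensor factor of `(ℂ^N)^{⊗n}` and as the
identity on the other factors. -/
def embedAt (n : ℕ) (k : Fin n) (A : Mat m) : MatN m n :=
  fun x y => A (x k) (y k) * ∏ l ∈ Finset.univ.erase k, (if x l = y l then 1 else 0)

/-- `Λ^{k,l} = Σ_j c_j^{(k)} c_j^{(l)}` on `(ℂ^N)^{⊗n}`. -/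
def LambdaKL (F : MajoranaFamily m) (n : ℕ) (k l : Fin n) : MatN m n :=
  ∑ j, embedAt n k (F.c j) * embedAt n l (F.c j)

/-- Partial trace of an operator on `(ℂ^N)^{⊗n}` over the tensor factors `2, …, n`. -/
def ptrRest (n : ℕ) (hn : 1 ≤ n) (ρ : MatN m n) : Mat m := fun a b =>
  ∑ g : Fin (n-1) → Fin (2^m),
    ρ (fun i => if h : i.val = 0 then a else g ⟨i.val - 1, by omega⟩)
      (fun i => if h : i.val = 0 then b else g ⟨i.val - 1, by omega⟩)

/-- `ρ` has an `n`-Gaussian-symmetric extension. -/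
def HasGSExt (F : MajoranaFamily m) (n : ℕ) (hn : 1 ≤ n) (ρ : Mat m) : Prop :=
  ∃ ext : MatN m n, IsState ext ∧ ptrRest n hn ext = ρ ∧
    ∀ k l : Fin n, k ≠ l → LambdaKL F n k l * ext = 0

/-- `‖Λ‖₁ = 2(m+1) C(2m, m+1)`. -/
def lambdaNorm (m : ℕ) : ℝ := 2*(m+1) * (Nat.choose (2*m) (m+1) : ℝ)

/-- `ε(n) = min {2, 10 ‖Λ‖₁² 2^{2m} n^{-1/3}}`. -/
def epsB (m n : ℕ) : ℝ :=
  min 2 (10 * lambdaNorm m ^ 2 * 2^(2*m) / (n:ℝ) ^ ((1:ℝ)/3))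

/-- `χ(n) = (ε(n)/2) (2m)!/m!`. -/
def chiB (m n : ℕ) : ℝ :=
  epsB m n / 2 * ((Nat.factorial (2*m) : ℝ) / (Nat.factorial m : ℝ))

/-- `δ(n) = χ(n)/(1+χ(n))`. -/
def deltaB (m n : ℕ) : ℝ := chiB m n / (1 + chiB m n)

/-- The parity operator `P = i^m c_1 ⋯ c_{2m}`. -/
def parityOp (F : MajoranaFamily m) : Mat m :=
  (Complex.I ^ m) • (((List.finRange (2*m)).map F.c).prod)

/-- The operator `I^{⊗ r} ⊗ c_s ⊗ P^{⊗(n-r-1)}` on `(ℂ^N)^{⊗n}` (0-based position `r`). -/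
def dOp (F : MajoranaFamily m) (n : ℕ) (r : Fin n) (s : Fin (2*m)) : MatN m n :=
  fun x y => ∏ l : Fin n,
    if l < r then (if x l = y l then 1 else 0)
    else if l = r then F.c s (x l) (y l)
    else parityOp F (x l) (y l)

/-- The family `d_1, …, d_{2mn}`, where `d_{2m(r-1)+s} = I^{⊗(r-1)} ⊗ c_s ⊗ P^{⊗(n-r)}`. -/
def dAll (hm : 1 ≤ m) (F : MajoranaFamily m) (n : ℕ) (j : Fin (2*(m*n))) : MatN m n :=
  dOp F n
    ⟨j.val / (2*m), by
      have h1 := j.isLt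
      rw [Nat.div_lt_iff_lt_mul (by omega)]
      have h2 : n * (2*m) = 2*(m*n) := by ring
      omega⟩
    ⟨j.val % (2*m), Nat.mod_lt _ (by omega)⟩

/-- The index `2m(k-1)+j` (0-based: `2mk + j`) into a family of `2mn` Majorana operators. -/
def bigIdx (m n : ℕ) (k : Fin n) (j : Fin (2*m)) : Fin (2*(m*n)) :=
  ⟨2*m*k.val + j.val, by
    have hk : k.val + 1 ≤ n := k.isLt
    have hj := j.isLt
    have h1 : 2*m*(k.val+1) = 2*m*k.val + 2*m := by ring
    have h2 : 2*m*(k.val+1) ≤ 2*m*n := Nat.mul_le_mul le_rfl hk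
    have h3 : 2*m*n = 2*(m*n) := by ring
    omega⟩

/-- `Γ^{k,l} = Σ_{j=1}^{2m} (-1)^{m-j} e_{2m(k-1)+j} · e_{2m(l-1)+1} ⋯ ê_{2m(l-1)+j} ⋯ e_{2ml}`. -/
def GammaKL (m n : ℕ) (E : MajoranaFamily (m*n)) (k l : Fin n) :
    Matrix (Fin (2^(m*n))) (Fin (2^(m*n))) ℂ :=
  ∑ j : Fin (2*m), ((-1:ℂ) ^ ((m:ℤ) - (j.val+1 : ℤ))) •
    (E.c (bigIdx m n k j) *
      (((List.finRange (2*m)).filter (fun i => i ≠ j)).map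
        (fun i => E.c (bigIdx m n l i))).prod)

/-- `C = i^{mn} e_1 ⋯ e_{2mn}`. -/
def bigParity (m n : ℕ) (E : MajoranaFamily (m*n)) :
    Matrix (Fin (2^(m*n))) (Fin (2^(m*n))) ℂ :=
  (Complex.I ^ (m*n)) • (((List.finRange (2*(m*n))).map E.c).prod)

/-- The `n`-fold tensor power `A^{⊗n}` of a matrix on `ℂ^N`. -/
def tpow (n : ℕ) (A : Mat m) : MatN m n := fun x y => ∏ k, A (x k) (y k)



namespace Stmt15Aux

variable {m : ℕ} (F : MajoranaFamily m) (R : Matrix (Fin (2*m)) (Fin (2*m)) ℝ)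

def i0 (k : Fin m) : Fin (2*m) := ⟨2*k.val, by omega⟩
def i1 (k : Fin m) : Fin (2*m) := ⟨2*k.val+1, by omega⟩

lemma c_add (i i' : Fin (2*m)) :
    F.c i * F.c i' + F.c i' * F.c i = (if i = i' then (2:ℂ) else 0) • 1 := by
  by_cases h : i = i'
  · subst h; rw [F.sq]; simp [two_smul]
  · rw [F.anticomm i i' h]; simp [h]

lemma tilde_add (hR : Rᵀ * R = 1) (j k : Fin (2*m)) :
    tilde F R j * tilde F R k + tilde F R k * tilde F R j
      = (if j = k then (2:ℂ) else 0) • 1 := by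
  have h1 : tilde F R j * tilde F R k
      = ∑ i, ∑ i', ((R i j : ℂ) * (R i' k : ℂ)) • (F.c i * F.c i') := by
    unfold tilde
    rw [Finset.sum_mul_sum]
    refine Finset.sum_congr rfl fun i _ => Finset.sum_congr rfl fun i' _ => ?_
    rw [smul_mul_assoc, mul_smul_comm, smul_smul]
  have h2 : tilde F R k * tilde F R j
      = ∑ i, ∑ i', ((R i j : ℂ) * (R i' k : ℂ)) • (F.c i' * F.c i) := by
    unfold tilde
    rw [Finset.sum_mul_sum, Finset.sum_comm]
    refine Finset.sum_congr rfl fun i _ => Finset.sum_congr rfl fun i' _ => ?_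
    rw [smul_mul_assoc, mul_smul_comm, smul_smul, mul_comm]
  calc tilde F R j * tilde F R k + tilde F R k * tilde F R j
      = ∑ i, ∑ i', ((R i j : ℂ) * (R i' k : ℂ)) • (F.c i * F.c i' + F.c i' * F.c i) := by
        rw [h1, h2, ← Finset.sum_add_distrib]
        refine Finset.sum_congr rfl fun i _ => ?_
        rw [← Finset.sum_add_distrib]
        exact Finset.sum_congr rfl fun i' _ => (smul_add _ _ _).symm
    _ = ∑ i, ((R i j : ℂ) * (R i k : ℂ) * 2) • 1 := by
        refine Finset.sum_congr rfl fun i _ => ?_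
        rw [Finset.sum_eq_single i]
        · rw [c_add, if_pos rfl, smul_smul]
        · intro i' _ hne
          rw [c_add, if_neg (Ne.symm hne)]
          simp
        · simp
    _ = ((∑ i, (R i j : ℂ) * (R i k : ℂ)) * 2) • 1 := by
        rw [Finset.sum_mul, ← Finset.sum_smul]
    _ = (if j = k then (2:ℂ) else 0) • 1 := by
        have hR' : ∑ i, R i j * R i k = if j = k then (1:ℝ) else 0 := by
          have h := congrFun (congrFun hR j) k
          simpa [Matrix.mul_apply, Matrix.transpose_apply, Matrix.one_apply] using h
        have : (∑ i, (R i j : ℂ) * (R i k : ℂ)) = ((∑ i, R i j * R i k : ℝ) : ℂ) := by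
          push_cast; rfl
        rw [this, hR']
        by_cases h : j = k <;> simp [h]

lemma tilde_sq (hR : Rᵀ * R = 1) (j : Fin (2*m)) : tilde F R j * tilde F R j = 1 := by
  have h := tilde_add F R hR j j
  rw [if_pos rfl] at h
  have h2 : (2:ℂ) • (tilde F R j * tilde F R j) = (2:ℂ) • (1 : Mat m) := by
    rw [two_smul]; exact h
  exact smul_right_injective _ two_ne_zero h2

lemma tilde_anti (hR : Rᵀ * R = 1) {j k : Fin (2*m)} (h : j ≠ k) :
    tilde F R j * tilde F R k = -(tilde F R k * tilde F R j) := by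
  have h2 := tilde_add F R hR j k
  rw [if_neg h, zero_smul] at h2
  exact eq_neg_of_add_eq_zero_left h2

def bOp (k : Fin m) : Mat m := Complex.I • (tilde F R (i0 k) * tilde F R (i1 k))

lemma i0_ne_i1 (k : Fin m) : i0 k ≠ i1 k := by
  simp only [i0, i1, ne_eq, Fin.mk.injEq]; omega

lemma anti_anti_comm {A : Type*} [Ring A] {a x y : A}
    (h1 : a*x = -(x*a)) (h2 : a*y = -(y*a)) : a*(x*y) = (x*y)*a := by
  rw [← mul_assoc, h1, neg_mul, mul_assoc, h2, mul_neg, neg_neg, ← mul_assoc]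

lemma bOp_sq (hR : Rᵀ * R = 1) (k : Fin m) : bOp F R k * bOp F R k = 1 := by
  set x := tilde F R (i0 k) with hx
  set y := tilde F R (i1 k) with hy
  have hxy : x * y = -(y * x) := tilde_anti F R hR (i0_ne_i1 k)
  have hxyxy : x * y * (x * y) = -1 := by
    have hyx : y * x = -(x*y) := by rw [hxy, neg_neg]
    calc x * y * (x * y) = x * (y * x) * y := by noncomm_ring
      _ = x * (-(x*y)) * y := by rw [hyx]
      _ = -(x * x * (y * y)) := by noncomm_ring
      _ = -1 := by rw [tilde_sq F R hR, tilde_sq F R hR, one_mul]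
  rw [bOp, smul_mul_assoc, mul_smul_comm, smul_smul, Complex.I_mul_I, hxyxy]
  simp

lemma ct_bOp_anti (hR : Rᵀ * R = 1) (k : Fin m) :
    tilde F R (i0 k) * bOp F R k = -(bOp F R k * tilde F R (i0 k)) := by
  set x := tilde F R (i0 k)
  set y := tilde F R (i1 k)
  have hyx : y * x = -(x*y) := by
    rw [tilde_anti F R hR (Ne.symm (i0_ne_i1 k))]
  have h1 : x * (x * y) = y := by rw [← mul_assoc, tilde_sq F R hR, one_mul]
  have h2 : (x * y) * x = -y := by
    rw [mul_assoc, hyx, mul_neg, ← mul_assoc, tilde_sq F R hR, one_mul]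
  rw [bOp, mul_smul_comm, smul_mul_assoc, h1, h2]
  simp

lemma ct_bOp_comm (hR : Rᵀ * R = 1) {j : Fin (2*m)} {k : Fin m}
    (h0 : j ≠ i0 k) (h1 : j ≠ i1 k) :
    tilde F R j * bOp F R k = bOp F R k * tilde F R j := by
  rw [bOp, mul_smul_comm, smul_mul_assoc]
  congr 1
  exact anti_anti_comm (tilde_anti F R hR h0) (tilde_anti F R hR h1)

lemma bOp_comm (hR : Rᵀ * R = 1) {k k' : Fin m} (h : k ≠ k') :
    bOp F R k * bOp F R k' = bOp F R k' * bOp F R k := by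
  have hv : k.val ≠ k'.val := fun hv => h (Fin.ext hv)
  have c00 : i0 k ≠ i0 k' := by simp only [i0, ne_eq, Fin.mk.injEq]; omega
  have c01 : i0 k ≠ i1 k' := by simp only [i0, i1, ne_eq, Fin.mk.injEq]; omega
  have c10 : i1 k ≠ i0 k' := by simp only [i0, i1, ne_eq, Fin.mk.injEq]; omega
  have c11 : i1 k ≠ i1 k' := by simp only [i1, ne_eq, Fin.mk.injEq]; omega
  have hx : tilde F R (i0 k) * (tilde F R (i0 k') * tilde F R (i1 k'))
      = (tilde F R (i0 k') * tilde F R (i1 k')) * tilde F R (i0 k) :=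
    anti_anti_comm (tilde_anti F R hR c00) (tilde_anti F R hR c01)
  have hy : tilde F R (i1 k) * (tilde F R (i0 k') * tilde F R (i1 k'))
      = (tilde F R (i0 k') * tilde F R (i1 k')) * tilde F R (i1 k) :=
    anti_anti_comm (tilde_anti F R hR c10) (tilde_anti F R hR c11)
  have huv : (tilde F R (i0 k) * tilde F R (i1 k)) * (tilde F R (i0 k') * tilde F R (i1 k'))
      = (tilde F R (i0 k') * tilde F R (i1 k')) * (tilde F R (i0 k) * tilde F R (i1 k)) := by
    rw [mul_assoc, hy, ← mul_assoc, hx, mul_assoc]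
  simp only [bOp, smul_mul_assoc, mul_smul_comm]
  rw [huv]

lemma bOp_comm' (hR : Rᵀ * R = 1) (k k' : Fin m) :
    bOp F R k * bOp F R k' = bOp F R k' * bOp F R k := by
  by_cases h : k = k'
  · rw [h]
  · exact bOp_comm F R hR h

lemma ct_prod_comm (hR : Rᵀ * R = 1) (k₀ : Fin m) (t : List (Fin m)) (ht : k₀ ∉ t) :
    tilde F R (i0 k₀) * (t.map (bOp F R)).prod
      = (t.map (bOp F R)).prod * tilde F R (i0 k₀) := by
  induction t with
  | nil => simp
  | cons a t ih =>
    have ha : k₀ ≠ a := fun h => ht (h ▸ (List.mem_cons_self : a ∈ a :: t))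
    have hv : k₀.val ≠ a.val := fun h => ha (Fin.ext h)
    have h0 : i0 k₀ ≠ i0 a := by simp only [i0, ne_eq, Fin.mk.injEq]; omega
    have h1 : i0 k₀ ≠ i1 a := by simp only [i0, i1, ne_eq, Fin.mk.injEq]; omega
    have ht' : k₀ ∉ t := fun h => ht (List.mem_cons_of_mem a h)
    simp only [List.map_cons, List.prod_cons]
    rw [← mul_assoc, ct_bOp_comm F R hR h0 h1, mul_assoc, ih ht', ← mul_assoc]

lemma bOp_prod_comm (hR : Rᵀ * R = 1) (a : Fin m) (t : List (Fin m)) :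
    bOp F R a * (t.map (bOp F R)).prod = (t.map (bOp F R)).prod * bOp F R a := by
  induction t with
  | nil => simp
  | cons b t ih =>
    simp only [List.map_cons, List.prod_cons]
    rw [← mul_assoc, bOp_comm' F R hR a b, mul_assoc, ih, ← mul_assoc]

lemma trace_bprod (hR : Rᵀ * R = 1) (t : List (Fin m)) (hnd : t.Nodup) (hne : t ≠ []) :
    ((t.map (bOp F R)).prod).trace = 0 := by
  obtain ⟨k₀, t', rfl⟩ : ∃ k₀ t', t = k₀ :: t' := by
    cases t with
    | nil => exact absurd rfl hne
    | cons a t => exact ⟨a, t, rfl⟩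
  have hk₀ : k₀ ∉ t' := (List.nodup_cons.mp hnd).1
  set X := tilde F R (i0 k₀) with hX
  set B := ((k₀ :: t').map (bOp F R)).prod with hB
  have hXB : X * B = -(B * X) := by
    rw [hB]
    simp only [List.map_cons, List.prod_cons]
    rw [← mul_assoc, ct_bOp_anti F R hR k₀, neg_mul, mul_assoc,
      ct_prod_comm F R hR k₀ t' hk₀, ← mul_assoc, mul_assoc]
  have hXX : X * X = 1 := tilde_sq F R hR _
  have key : B.trace = -(B.trace) := by
    calc B.trace = (X * (X * B)).trace := by rw [← mul_assoc, hXX, one_mul]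
      _ = ((X * B) * X).trace := by rw [Matrix.trace_mul_comm]
      _ = (-(B * X) * X).trace := by rw [hXB]
      _ = -(B * (X * X)).trace := by rw [neg_mul, Matrix.trace_neg, mul_assoc]
      _ = -(B.trace) := by rw [hXX, mul_one]
  have h0 : (2:ℂ) * B.trace = 0 := by
    rw [two_mul]
    nth_rewrite 1 [key]
    exact neg_add_cancel _
  exact (mul_eq_zero.mp h0).resolve_left two_ne_zero

lemma trace_main (hR : Rᵀ * R = 1) (α β : Fin m → ℂ) (t l : List (Fin m))
    (hnd : (t ++ l).Nodup) :
    ((t.map (bOp F R)).prod *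
      (l.map (fun k => α k • (1 : Mat m) + β k • bOp F R k)).prod).trace
    = if t = [] then (2:ℂ)^m * (l.map α).prod else 0 := by
  induction l generalizing t with
  | nil =>
    rw [List.append_nil] at hnd
    simp only [List.map_nil, List.prod_nil, mul_one]
    by_cases ht : t = []
    · subst ht
      simp [Matrix.trace_one]
    · rw [if_neg ht]
      exact trace_bprod F R hR t hnd ht
  | cons a l ih =>
    have hnd' : (a :: (t ++ l)).Nodup := List.perm_middle.nodup hnd
    have hndtl : (t ++ l).Nodup := (List.nodup_cons.mp hnd').2
    have hna : a ∉ t ++ l := (List.nodup_cons.mp hnd').1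
    have hnat : a ∉ t := fun h => hna (List.mem_append.mpr (Or.inl h))
    have hnd2 : ((a :: t) ++ l).Nodup := hnd'
    set B := (t.map (bOp F R)).prod with hBdef
    have hsplit : B * ((a :: l).map (fun k => α k • (1 : Mat m) + β k • bOp F R k)).prod
        = α a • (B * (l.map (fun k => α k • (1 : Mat m) + β k • bOp F R k)).prod)
          + β a • (((a :: t).map (bOp F R)).prod
              * (l.map (fun k => α k • (1 : Mat m) + β k • bOp F R k)).prod) := by
      simp only [List.map_cons, List.prod_cons]
      rw [← mul_assoc, mul_add, mul_smul_comm, mul_one, mul_smul_comm,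
        bOp_prod_comm F R hR a t]
      rw [add_mul, smul_mul_assoc, smul_mul_assoc, mul_assoc]
    rw [hsplit, Matrix.trace_add, Matrix.trace_smul, Matrix.trace_smul,
      ih t hndtl, ih (a :: t) hnd2]
    rw [if_neg (List.cons_ne_nil a t)]
    by_cases ht : t = []
    · subst ht
      simp only [List.map_cons, List.prod_cons, smul_eq_mul, smul_zero, add_zero]
      simp
      ring
    · simp [if_neg ht]

lemma prod_sq {A : Type*} [Monoid A] (l : List (Fin m)) (g : Fin m → A)
    (hc : ∀ x y : Fin m, g x * g y = g y * g x) :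
    (l.map g).prod * (l.map g).prod = (l.map (fun k => g k * g k)).prod := by
  induction l with
  | nil => simp
  | cons a l ih =>
    simp only [List.map_cons, List.prod_cons]
    have hP : Commute (g a) ((l.map g).prod) := by
      apply Commute.list_prod_right
      intro x hx
      obtain ⟨y, _, rfl⟩ := List.mem_map.mp hx
      exact hc a y
    calc g a * (l.map g).prod * (g a * (l.map g).prod)
        = g a * ((l.map g).prod * g a) * (l.map g).prod := by
          rw [mul_assoc, mul_assoc, mul_assoc]
      _ = g a * (g a * (l.map g).prod) * (l.map g).prod := by rw [hP.symm.eq]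
      _ = g a * g a * ((l.map g).prod * (l.map g).prod) := by
          rw [mul_assoc, mul_assoc, mul_assoc]
      _ = g a * g a * (l.map (fun k => g k * g k)).prod := by rw [ih]

lemma prod_two_smul (l : List (Fin m)) (g : Fin m → Mat m) :
    (l.map (fun k => (2:ℂ) • g k)).prod = (2:ℂ)^l.length • (l.map g).prod := by
  induction l with
  | nil => simp
  | cons a l ih =>
    simp only [List.map_cons, List.prod_cons, List.length_cons, ih,
      smul_mul_assoc, mul_smul_comm, smul_smul]
    rw [pow_succ, mul_comm]

lemma one_add_smul_comm (hR : Rᵀ * R = 1) (s t : ℂ) (x y : Fin m) :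
    ((1 : Mat m) + s • bOp F R x) * ((1 : Mat m) + t • bOp F R y)
      = ((1 : Mat m) + t • bOp F R y) * ((1 : Mat m) + s • bOp F R x) := by
  have h := bOp_comm' F R hR x y
  simp only [add_mul, mul_add, one_mul, mul_one, smul_mul_assoc, mul_smul_comm, h, smul_add,
    smul_smul]
  rw [mul_comm s t]
  abel

lemma sq_expand (hR : Rᵀ * R = 1) (s : ℂ) (x : Fin m) :
    ((1 : Mat m) + s • bOp F R x) * ((1 : Mat m) + s • bOp F R x)
      = ((1:ℂ) + s^2) • (1 : Mat m) + (2*s) • bOp F R x := by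
  simp only [add_mul, mul_add, one_mul, mul_one, smul_mul_assoc, mul_smul_comm, smul_add,
    smul_smul, bOp_sq F R hR]
  rw [add_smul, one_smul, pow_two, two_mul, add_smul]
  abel

lemma gaussStd_eq (lam : Fin m → ℝ) :
    gaussStd F R lam = ((2:ℂ)^m)⁻¹ •
      (List.ofFn (fun k => (1 : Mat m) + (lam k : ℂ) • bOp F R k)).prod := by
  have hfun : (fun k : Fin m => (1 : Mat m) + (Complex.I * (lam k : ℂ)) •
      (tilde F R ⟨2*k.val, by omega⟩ * tilde F R ⟨2*k.val+1, by omega⟩))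
      = fun k => (1 : Mat m) + (lam k : ℂ) • bOp F R k := by
    funext k
    rw [bOp, smul_smul, mul_comm]
    rfl
  rw [gaussStd, hfun]

end Stmt15Aux

/-- A standard-form Gaussian state is pure (`ρ² = ρ`) iff all `λ_k ∈ {-1, 1}`. -/
theorem stmt_15 (m : ℕ) (hm : 1 ≤ m) (F : MajoranaFamily m)
    (R : Matrix (Fin (2*m)) (Fin (2*m)) ℝ) (hR : Rᵀ * R = 1) (hdet : R.det = 1)
    (lam : Fin m → ℝ) (hlam : ∀ k, -1 ≤ lam k ∧ lam k ≤ 1) :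
    gaussStd F R lam * gaussStd F R lam = gaussStd F R lam ↔
      ∀ k, lam k = 1 ∨ lam k = -1 := by
  classical
  set b : Fin m → Mat m := Stmt15Aux.bOp F R with hb
  set G : Fin m → Mat m := fun k => (1 : Mat m) + (lam k : ℂ) • b k with hG
  set l : List (Fin m) := List.finRange m with hl
  have hlen : l.length = m := List.length_finRange
  have hnd : l.Nodup := List.nodup_finRange m
  have h2m : ((2:ℂ)^m) ≠ 0 := by positivity
  have hge : gaussStd F R lam = ((2:ℂ)^m)⁻¹ • (l.map G).prod := by
    rw [Stmt15Aux.gaussStd_eq F R lam, List.ofFn_eq_map]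
  have hcomm : ∀ x y : Fin m, G x * G y = G y * G x := fun x y =>
    Stmt15Aux.one_add_smul_comm F R hR _ _ x y
  have hPP : (l.map G).prod * (l.map G).prod
      = (l.map (fun k => ((1:ℂ)+(lam k:ℂ)^2) • (1 : Mat m) + (2*(lam k:ℂ)) • b k)).prod := by
    rw [Stmt15Aux.prod_sq l G hcomm]
    refine congrArg List.prod (List.map_congr_left fun k _ => ?_)
    exact Stmt15Aux.sq_expand F R hR _ k
  constructor
  · intro hpure
    rw [hge] at hpure
    have htr := congrArg Matrix.trace hpure
    rw [smul_mul_assoc, mul_smul_comm, smul_smul, hPP] at htr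
    have htrP : ((l.map G).prod).trace = (2:ℂ)^m := by
      have h := Stmt15Aux.trace_main F R hR (fun _ => (1:ℂ)) (fun k => (lam k : ℂ)) [] l
        (by simpa using hnd)
      simp only [List.map_nil, List.prod_nil, one_mul, if_pos, one_smul] at h
      rw [hG, hb, h]
      simp
    have htrPP : ((l.map (fun k => ((1:ℂ)+(lam k:ℂ)^2) • (1 : Mat m)
        + (2*(lam k:ℂ)) • b k)).prod).trace
        = (2:ℂ)^m * (l.map (fun k => (1:ℂ)+(lam k:ℂ)^2)).prod := by
      have h := Stmt15Aux.trace_main F R hR (fun k => (1:ℂ)+(lam k:ℂ)^2)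
        (fun k => 2*(lam k : ℂ)) [] l (by simpa using hnd)
      simp only [List.map_nil, List.prod_nil, one_mul, if_pos] at h
      rw [← hb] at h
      exact h
    rw [Matrix.trace_smul, Matrix.trace_smul, htrPP, htrP, smul_eq_mul, smul_eq_mul] at htr
    have hQ : (l.map (fun k => (1:ℂ)+(lam k:ℂ)^2)).prod = (2:ℂ)^m := by
      have h2m2 : ((2:ℂ)^m)⁻¹ * ((2:ℂ)^m)⁻¹ ≠ 0 := mul_ne_zero (inv_ne_zero h2m) (inv_ne_zero h2m)
      field_simp at htr
      linear_combination htr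
    have hQ' : (∏ k : Fin m, ((1:ℂ)+(lam k:ℂ)^2)) = (2:ℂ)^m := by
      rw [← List.prod_ofFn, List.ofFn_eq_map]
      exact hQ
    have hQR : (∏ k : Fin m, (1 + lam k^2)) = (2:ℝ)^m := by
      have hc : ((∏ k : Fin m, (1 + lam k ^ 2) : ℝ) : ℂ) = (((2:ℝ)^m : ℝ) : ℂ) := by
        push_cast
        exact hQ'
      exact_mod_cast hc
    intro k
    by_contra hk
    push_neg at hk
    have hb1 := (hlam k).1
    have hb2 := (hlam k).2
    have hlt : lam k ^ 2 < 1 := by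
      rcases lt_or_eq_of_le hb2 with h | h
      · rcases lt_or_eq_of_le hb1 with h' | h'
        · nlinarith
        · exact absurd h'.symm hk.2
      · exact absurd h hk.1
    have hstrict : (∏ k : Fin m, (1 + lam k^2)) < ∏ _k : Fin m, (2:ℝ) := by
      exact Finset.prod_lt_prod (fun i _ => by positivity)
        (fun i _ => by nlinarith [(hlam i).1, (hlam i).2])
        ⟨k, Finset.mem_univ k, by nlinarith⟩
    rw [Finset.prod_const, Finset.card_univ, Fintype.card_fin, hQR] at hstrict
    exact lt_irrefl _ hstrict
  · intro h1
    have hGsq : ∀ k, G k * G k = (2:ℂ) • G k := by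
      intro k
      have hs : ((lam k : ℂ))^2 = 1 := by
        rcases h1 k with h | h <;> rw [h] <;> norm_num
      rw [hG]
      rw [Stmt15Aux.sq_expand F R hR _ k, hs]
      rw [smul_add, smul_smul]
      norm_num
      rfl
    have hPPP : (l.map G).prod * (l.map G).prod = (2:ℂ)^m • (l.map G).prod := by
      rw [Stmt15Aux.prod_sq l G hcomm]
      rw [show (l.map fun k => G k * G k) = l.map (fun k => (2:ℂ) • G k) from by
        simp only [hGsq]]
      rw [Stmt15Aux.prod_two_smul, hlen]
    rw [hge, smul_mul_assoc, mul_smul_comm, smul_smul, hPPP, smul_smul]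
    congr 1
    field_simp

end
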